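/- Let A be a symmetric i×i matrix, D a symmetric (4−i)×(4−i) matrix, and C a (4−i)×i matrix, all with entries in a 3-dimensional space of linear forms. Over a discrete valuation ring with uniformizer a, the family of triples given by the matrices φ_a = [[A, a·Cᵗ],[C, D]], ψ_a = [[I, 0],[0, a·I]], ψ'_a = [[a·I, 0],[0, I]] satisfies: for a invertible, ψ_a and ψ'_a are invertible and proportional inverses of each other (ψ'_a ∘ ψ_a = a·I and ψ_a ∘ ψ'_a = a·I), the matrix ψ_a ∘ φ_a is symmetric, and the matrix φ_aᵗ ∘ ψ'_aᵗ-type composite is symmetric; at a = 0 the family specializes to (φ, ψ, ψ') = ([[A,0],[C,D]], [[I,0],[0,0]], [[0,0],[0,I]]) where ψ has rank i and ψ' has rank 4−i with ψ' ∘ ψ = 0 and ψ ∘ ψ' = 0. -/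

import Mathlib

open Matrix MvPolynomial

section aux
variable {R : Type*} [CommRing R] [StrongRankCondition R]
variable {m n : Type*} [Fintype m] [Fintype n] [DecidableEq m] [DecidableEq n]

set_option linter.unusedSectionVars false

private def extL : (m → R) →ₗ[R] (m ⊕ n → R) where
  toFun u := Sum.elim u 0
  map_add' u v := by funext x; cases x <;> simp
  map_smul' c u := by funext x; cases x <;> simp

private def extR : (n → R) →ₗ[R] (m ⊕ n → R) where
  toFun u := Sum.elim 0 u
  map_add' u v := by funext x; cases x <;> simp
  map_smul' c u := by funext x; cases x <;> simp

private lemma extL_inj : Function.Injective (extL : (m → R) →ₗ[R] (m ⊕ n → R)) := by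
  intro u v h
  funext p
  exact congrFun h (Sum.inl p)

private lemma extR_inj : Function.Injective (extR : (n → R) →ₗ[R] (m ⊕ n → R)) := by
  intro u v h
  funext p
  exact congrFun h (Sum.inr p)

private lemma range_mulVecLin_L :
    LinearMap.range (Matrix.fromBlocks (1 : Matrix m m R) 0 0 (0 : Matrix n n R)).mulVecLin
      = LinearMap.range (extL : (m → R) →ₗ[R] (m ⊕ n → R)) := by
  apply le_antisymm
  · rintro v ⟨u, rfl⟩
    refine ⟨u ∘ Sum.inl, ?_⟩
    funext x
    cases x with
    | inl p => simp [extL, Matrix.mulVecLin, Matrix.mulVec, dotProduct, Fintype.sum_sum_type,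
        Matrix.fromBlocks, Matrix.one_apply, Finset.sum_ite_eq]
    | inr q => simp [extL, Matrix.mulVecLin, Matrix.mulVec, dotProduct, Fintype.sum_sum_type,
        Matrix.fromBlocks]
  · rintro v ⟨u, rfl⟩
    refine ⟨Sum.elim u 0, ?_⟩
    funext x
    cases x with
    | inl p => simp [extL, Matrix.mulVecLin, Matrix.mulVec, dotProduct, Fintype.sum_sum_type,
        Matrix.fromBlocks, Matrix.one_apply, Finset.sum_ite_eq]
    | inr q => simp [extL, Matrix.mulVecLin, Matrix.mulVec, dotProduct, Fintype.sum_sum_type,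
        Matrix.fromBlocks]

private lemma range_mulVecLin_R :
    LinearMap.range (Matrix.fromBlocks (0 : Matrix m m R) 0 0 (1 : Matrix n n R)).mulVecLin
      = LinearMap.range (extR : (n → R) →ₗ[R] (m ⊕ n → R)) := by
  apply le_antisymm
  · rintro v ⟨u, rfl⟩
    refine ⟨u ∘ Sum.inr, ?_⟩
    funext x
    cases x with
    | inl p => simp [extR, Matrix.mulVecLin, Matrix.mulVec, dotProduct, Fintype.sum_sum_type,
        Matrix.fromBlocks]
    | inr q => simp [extR, Matrix.mulVecLin, Matrix.mulVec, dotProduct, Fintype.sum_sum_type,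
        Matrix.fromBlocks, Matrix.one_apply, Finset.sum_ite_eq]
  · rintro v ⟨u, rfl⟩
    refine ⟨Sum.elim 0 u, ?_⟩
    funext x
    cases x with
    | inl p => simp [extR, Matrix.mulVecLin, Matrix.mulVec, dotProduct, Fintype.sum_sum_type,
        Matrix.fromBlocks]
    | inr q => simp [extR, Matrix.mulVecLin, Matrix.mulVec, dotProduct, Fintype.sum_sum_type,
        Matrix.fromBlocks, Matrix.one_apply, Finset.sum_ite_eq]

private lemma rank_blockL :
    (Matrix.fromBlocks (1 : Matrix m m R) 0 0 (0 : Matrix n n R)).rank = Fintype.card m := by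
  rw [Matrix.rank, range_mulVecLin_L]
  rw [((LinearEquiv.ofInjective _ extL_inj).symm.finrank_eq)]
  simp [Module.finrank_pi]

private lemma rank_blockR :
    (Matrix.fromBlocks (0 : Matrix m m R) 0 0 (1 : Matrix n n R)).rank = Fintype.card n := by
  rw [Matrix.rank, range_mulVecLin_R]
  rw [((LinearEquiv.ofInjective _ extR_inj).symm.finrank_eq)]
  simp [Module.finrank_pi]

end aux

/-- Degeneration of triples: over a discrete valuation ring `A` with uniformizer `a`,
consider block matrices (blocks of sizes `i` and `4−i`, `1 ≤ i ≤ 3`) whose entries are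
linear forms in 3 variables (polynomials in `MvPolynomial (Fin 3) A`), with `A₀`, `D₀`
symmetric.  The family `φ_s = [[A₀, s·C₀ᵀ],[C₀, D₀]]`, `ψ_s = [[I,0],[0,s·I]]`,
`ψ'_s = [[s·I,0],[0,I]]` satisfies: `ψ'_s ∘ ψ_s = s·I = ψ_s ∘ ψ'_s` (so for `s = a`
invertible, `ψ_a`, `ψ'_a` are invertible and proportional inverses of each other),
`ψ_s ∘ φ_s` is symmetric and `ψ'_s ∘ φ_sᵀ` is symmetric; and at `s = 0` the family
specializes to `(φ, ψ, ψ') = ([[A₀,0],[C₀,D₀]], [[I,0],[0,0]], [[0,0],[0,I]])` where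
`ψ` has rank `i`, `ψ'` has rank `4−i`, and `ψ' ∘ ψ = 0 = ψ ∘ ψ'`. -/
theorem degeneration_of_triples
    (A : Type*) [CommRing A] [IsDomain A] [IsDiscreteValuationRing A]
    (a : A) (ha : Irreducible a)
    (i : ℕ) (h1 : 1 ≤ i) (h3 : i ≤ 3)
    (A₀ : Matrix (Fin i) (Fin i) (MvPolynomial (Fin 3) A))
    (C₀ : Matrix (Fin (4 - i)) (Fin i) (MvPolynomial (Fin 3) A))
    (D₀ : Matrix (Fin (4 - i)) (Fin (4 - i)) (MvPolynomial (Fin 3) A))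
    (hA₀ : A₀ᵀ = A₀) (hD₀ : D₀ᵀ = D₀)
    (hA₀h : ∀ p q, (A₀ p q).IsHomogeneous 1)
    (hC₀h : ∀ p q, (C₀ p q).IsHomogeneous 1)
    (hD₀h : ∀ p q, (D₀ p q).IsHomogeneous 1)
    -- the family, parametrized by s : A
    (φ : A → Matrix (Fin i ⊕ Fin (4 - i)) (Fin i ⊕ Fin (4 - i)) (MvPolynomial (Fin 3) A))
    (ψ ψ' : A → Matrix (Fin i ⊕ Fin (4 - i)) (Fin i ⊕ Fin (4 - i)) (MvPolynomial (Fin 3) A))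
    (hφ : ∀ s, φ s = Matrix.fromBlocks A₀ ((MvPolynomial.C s : MvPolynomial (Fin 3) A) • C₀ᵀ) C₀ D₀)
    (hψ : ∀ s, ψ s = Matrix.fromBlocks 1 0 0 ((MvPolynomial.C s : MvPolynomial (Fin 3) A) • 1))
    (hψ' : ∀ s, ψ' s = Matrix.fromBlocks ((MvPolynomial.C s : MvPolynomial (Fin 3) A) • 1) 0 0 1) :
    (∀ s : A, ψ' s * ψ s = (MvPolynomial.C s : MvPolynomial (Fin 3) A) • 1 ∧ ψ s * ψ' s = (MvPolynomial.C s : MvPolynomial (Fin 3) A) • 1) ∧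
    (IsUnit a → IsUnit (ψ a) ∧ IsUnit (ψ' a)) ∧
    (∀ s : A, (ψ s * φ s)ᵀ = ψ s * φ s) ∧
    (∀ s : A, (ψ' s * (φ s)ᵀ)ᵀ = ψ' s * (φ s)ᵀ) ∧
    (φ 0 = Matrix.fromBlocks A₀ 0 C₀ D₀ ∧
      ψ 0 = Matrix.fromBlocks 1 0 0 0 ∧ ψ' 0 = Matrix.fromBlocks 0 0 0 1 ∧
      (ψ 0).rank = i ∧ (ψ' 0).rank = 4 - i ∧
      ψ' 0 * ψ 0 = 0 ∧ ψ 0 * ψ' 0 = 0) := by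
  refine ⟨?_, fun h => absurd h ha.not_isUnit, ?_, ?_, ?_, ?_, ?_, ?_, ?_, ?_, ?_⟩
  · intro s
    constructor <;>
      simp [hψ, hψ', Matrix.fromBlocks_multiply, ← Matrix.fromBlocks_one,
        Matrix.fromBlocks_smul]
  · intro s
    rw [hψ, hφ]
    have h : (Matrix.fromBlocks 1 0 0 ((MvPolynomial.C s : MvPolynomial (Fin 3) A) • 1) : Matrix (Fin i ⊕ Fin (4-i)) _ _) * Matrix.fromBlocks A₀ ((MvPolynomial.C s : MvPolynomial (Fin 3) A) • C₀ᵀ) C₀ D₀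
        = Matrix.fromBlocks A₀ ((MvPolynomial.C s : MvPolynomial (Fin 3) A) • C₀ᵀ) ((MvPolynomial.C s : MvPolynomial (Fin 3) A) • C₀) ((MvPolynomial.C s : MvPolynomial (Fin 3) A) • D₀) := by
      simp [Matrix.fromBlocks_multiply, Matrix.smul_mul]
    rw [h, Matrix.fromBlocks_transpose]
    simp [hA₀, hD₀]
  · intro s
    rw [hψ', hφ]
    have h : (Matrix.fromBlocks ((MvPolynomial.C s : MvPolynomial (Fin 3) A) • 1) 0 0 1 : Matrix (Fin i ⊕ Fin (4-i)) _ _) * (Matrix.fromBlocks A₀ ((MvPolynomial.C s : MvPolynomial (Fin 3) A) • C₀ᵀ) C₀ D₀)ᵀ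
        = Matrix.fromBlocks ((MvPolynomial.C s : MvPolynomial (Fin 3) A) • A₀) ((MvPolynomial.C s : MvPolynomial (Fin 3) A) • C₀ᵀ) ((MvPolynomial.C s : MvPolynomial (Fin 3) A) • C₀) D₀ := by
      rw [Matrix.fromBlocks_transpose, Matrix.transpose_smul, Matrix.transpose_transpose, hA₀, hD₀]
      simp [Matrix.fromBlocks_multiply, Matrix.smul_mul]
    rw [h, Matrix.fromBlocks_transpose]
    simp [hA₀, hD₀]
  · simp [hφ]
  · simp [hψ]
  · simp [hψ']
  · rw [hψ]
    have := rank_blockL (R := MvPolynomial (Fin 3) A) (m := Fin i) (n := Fin (4 - i))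
    simpa using this
  · rw [hψ']
    have := rank_blockR (R := MvPolynomial (Fin 3) A) (m := Fin i) (n := Fin (4 - i))
    simpa using this
  · simp [hψ, hψ', Matrix.fromBlocks_multiply]
  · simp [hψ, hψ', Matrix.fromBlocks_multiply]
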